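/- For α ∈ (0,1)∪(1,∞) and joint distribution p_X p_{Y|X} on finite alphabets, the Sibson mutual information admits the differential representation I_α^S(X;Y) = H_{1/α}(X) − H_α^S(X|Y), where H_α^S(X|Y) := min over reverse channels r_{X|Y} of (α/(1−α)) log Σ_{x,y} p_{X_{1/α}}(x) p_{Y|X}(y|x) r_{X|Y}(x|y)^{1−1/α}. -/

import Mathlib

open BigOperators

/-- `p` is a probability distribution on the finite set `X`. -/
def IsDist {X : Type*} [Fintype X] (p : X → ℝ) : Prop :=
  (∀ x, 0 ≤ p x) ∧ ∑ x, p x = 1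

/-- `W` is a channel from `X` to `Y`. -/
def IsChannel {X Y : Type*} [Fintype Y] (W : X → Y → ℝ) : Prop :=
  ∀ x, (∀ y, 0 ≤ W x y) ∧ ∑ y, W x y = 1

/-- The α-tilted (escort) distribution of `p`. -/
noncomputable def tilt {X : Type*} [Fintype X] (p : X → ℝ) (a : ℝ) : X → ℝ :=
  fun x => p x ^ a / ∑ x', p x' ^ a

/-- The Rényi entropy of order `a` of a distribution `p`. -/
noncomputable def renyi {X : Type*} [Fintype X] (p : X → ℝ) (a : ℝ) : ℝ :=
  (1 / (1 - a)) * Real.log (∑ x, p x ^ a)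

/-- Two-exponent Hölder inequality in "geometric mean" form. -/
lemma holder_theta {ι : Type*} {θ : ℝ} (h0 : 0 < θ) (h1 : θ < 1)
    (s : Finset ι) {a b : ι → ℝ} (ha : ∀ i ∈ s, 0 ≤ a i) (hb : ∀ i ∈ s, 0 ≤ b i) :
    ∑ i ∈ s, a i ^ θ * b i ^ (1 - θ) ≤ (∑ i ∈ s, a i) ^ θ * (∑ i ∈ s, b i) ^ (1 - θ) := by
  have h1θ : (0:ℝ) < 1 - θ := by linarith
  have hpq : Real.HolderConjugate (1/θ) (1/(1-θ)) := by
    refine ⟨?_, one_div_pos.mpr h0, one_div_pos.mpr h1θ⟩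
    rw [one_div, inv_inv, one_div, inv_inv, inv_one]; ring
  have H := Real.inner_le_Lp_mul_Lq_of_nonneg (s := s) hpq
      (f := fun i => a i ^ θ) (g := fun i => b i ^ (1 - θ))
      (fun i hi => Real.rpow_nonneg (ha i hi) θ)
      (fun i hi => Real.rpow_nonneg (hb i hi) (1-θ))
  have e1 : ∑ i ∈ s, (a i ^ θ) ^ (1/θ) = ∑ i ∈ s, a i :=
    Finset.sum_congr rfl fun i hi => by
      rw [← Real.rpow_mul (ha i hi), mul_one_div_cancel h0.ne', Real.rpow_one]
  have e2 : ∑ i ∈ s, (b i ^ (1-θ)) ^ (1/(1-θ)) = ∑ i ∈ s, b i :=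
    Finset.sum_congr rfl fun i hi => by
      rw [← Real.rpow_mul (hb i hi), mul_one_div_cancel h1θ.ne', Real.rpow_one]
  simpa only [e1, e2, one_div_one_div] using H

theorem sibsonMI_diff_repr {X Y : Type*} [Fintype X] [Fintype Y] [Nonempty Y]
    (α : ℝ) (hα0 : 0 < α) (hα1 : α ≠ 1)
    (p : X → ℝ) (W : X → Y → ℝ)
    (hp : IsDist p) (hps : ∀ x, 0 < p x) (hW : IsChannel W)
    (hWs : ∀ x y, 0 < W x y) :
    ∃ s h : ℝ,
      IsLeast {v : ℝ | ∃ q : Y → ℝ, IsDist q ∧ (∀ y, 0 < q y) ∧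
          v = (1 / (α - 1)) * Real.log (∑ x, ∑ y,
                (p x * W x y) ^ α * (p x * q y) ^ (1 - α))} s ∧
      IsLeast {v : ℝ | ∃ r : Y → X → ℝ, (∀ y, IsDist (r y)) ∧ (∀ y x, 0 < r y x) ∧
          v = (α / (1 - α)) * Real.log (∑ x, ∑ y,
                tilt p (1 / α) x * W x y * r y x ^ (1 - 1 / α))} h ∧
      s = renyi p (1 / α) - h := by
  classical
  obtain ⟨hp0, hp1⟩ := hp
  have hXne : Nonempty X := by
    rcases isEmpty_or_nonempty X with hE | hN
    · rw [Finset.univ_eq_empty, Finset.sum_empty] at hp1; norm_num at hp1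
    · exact hN
  have hαne : α ≠ 0 := hα0.ne'
  have hα1' : α - 1 ≠ 0 := sub_ne_zero.mpr hα1
  have h1α' : 1 - α ≠ 0 := fun h => hα1 (by linarith [sub_eq_zero.mp h])
  obtain ⟨f, hfy⟩ : ∃ f : Y → ℝ, ∀ y, f y = ∑ x, p x * W x y ^ α := ⟨_, fun _ => rfl⟩
  have hf : ∀ y, 0 < f y := fun y => by
    rw [hfy]
    exact Finset.sum_pos (fun x _ => mul_pos (hps x) (Real.rpow_pos_of_pos (hWs x y) α))
      Finset.univ_nonempty
  obtain ⟨S, hSs⟩ : ∃ S : ℝ, S = ∑ y, f y ^ (1/α) := ⟨_, rfl⟩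
  have hS : 0 < S := by
    rw [hSs]
    exact Finset.sum_pos (fun y _ => Real.rpow_pos_of_pos (hf y) _) Finset.univ_nonempty
  obtain ⟨T, hTs⟩ : ∃ T : ℝ, T = ∑ x, p x ^ (1/α) := ⟨_, rfl⟩
  have hT : 0 < T := by
    rw [hTs]
    exact Finset.sum_pos (fun x _ => Real.rpow_pos_of_pos (hps x) _) Finset.univ_nonempty
  have ht_def : ∀ x, tilt p (1/α) x = p x ^ (1/α) / T := fun x => by
    rw [tilt, hTs]
  have ht : ∀ x, 0 < tilt p (1/α) x := fun x => by
    rw [ht_def]; exact div_pos (Real.rpow_pos_of_pos (hps x) _) hT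
  -- simplification of the first double sum
  have sum1 : ∀ q : Y → ℝ, (∀ y, 0 ≤ q y) →
      (∑ x, ∑ y, (p x * W x y) ^ α * (p x * q y) ^ (1 - α)) = ∑ y, f y * q y ^ (1-α) := by
    intro q hq
    rw [Finset.sum_comm]
    refine Finset.sum_congr rfl fun y _ => ?_
    rw [hfy y, Finset.sum_mul]
    refine Finset.sum_congr rfl fun x _ => ?_
    rw [Real.mul_rpow (hp0 x) (hWs x y).le, Real.mul_rpow (hp0 x) (hq y)]
    have hpe : p x ^ α * p x ^ (1-α) = p x := by
      rw [← Real.rpow_add (hps x)]; norm_num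
    calc p x ^ α * W x y ^ α * (p x ^ (1-α) * q y ^ (1-α))
        = (p x ^ α * p x ^ (1-α)) * (W x y ^ α * q y ^ (1-α)) := by ring
      _ = p x * W x y ^ α * q y ^ (1-α) := by rw [hpe]; ring
  -- the second kernel and its per-`y` normalization
  obtain ⟨c, hcd⟩ : ∃ c : X → Y → ℝ, ∀ x y, c x y = tilt p (1/α) x * W x y :=
    ⟨_, fun _ _ => rfl⟩
  have hc : ∀ x y, 0 < c x y := fun x y => by rw [hcd]; exact mul_pos (ht x) (hWs x y)
  obtain ⟨g, hgd⟩ : ∃ g : Y → ℝ, ∀ y, g y = ∑ x, c x y ^ α := ⟨_, fun _ => rfl⟩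
  have hg : ∀ y, 0 < g y := fun y => by
    rw [hgd]
    exact Finset.sum_pos (fun x _ => Real.rpow_pos_of_pos (hc x y) _) Finset.univ_nonempty
  have hgf : ∀ y, g y = f y / T ^ α := by
    intro y
    rw [hgd, hfy, Finset.sum_div]
    refine Finset.sum_congr rfl fun x _ => ?_
    rw [hcd, Real.mul_rpow (ht x).le (hWs x y).le, ht_def,
      Real.div_rpow (Real.rpow_nonneg (hp0 x) _) hT.le,
      ← Real.rpow_mul (hp0 x), one_div_mul_cancel hαne, Real.rpow_one]
    ring
  have hsumg : ∑ y, g y ^ (1/α) = S / T := by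
    rw [hSs, Finset.sum_div]
    refine Finset.sum_congr rfl fun y _ => ?_
    rw [hgf y, Real.div_rpow (hf y).le (Real.rpow_nonneg hT.le α),
      ← Real.rpow_mul hT.le, mul_one_div_cancel hαne, Real.rpow_one]
  have sum2 : ∀ r : Y → X → ℝ,
      (∑ x, ∑ y, tilt p (1/α) x * W x y * r y x ^ (1 - 1/α)) =
        ∑ y, ∑ x, c x y * r y x ^ (1 - 1/α) := by
    intro r
    rw [Finset.sum_comm]
    exact Finset.sum_congr rfl fun y _ => Finset.sum_congr rfl fun x _ => by rw [hcd]
  refine ⟨(α/(α-1)) * Real.log S, (α/(1-α)) * (Real.log S - Real.log T), ⟨?_, ?_⟩, ⟨?_, ?_⟩, ?_⟩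
  · -- membership for s
    refine ⟨fun y => f y ^ (1/α) / S,
      ⟨fun y => (div_pos (Real.rpow_pos_of_pos (hf y) _) hS).le, ?_⟩,
      fun y => div_pos (Real.rpow_pos_of_pos (hf y) _) hS, ?_⟩
    · rw [← Finset.sum_div, ← hSs, div_self hS.ne']
    · rw [sum1 _ (fun y => (div_pos (Real.rpow_pos_of_pos (hf y) _) hS).le)]
      have key : ∑ y, f y * (f y ^ (1/α) / S) ^ (1-α) = S ^ α := by
        have e : ∀ y, f y * (f y ^ (1/α) / S) ^ (1-α) = f y ^ (1/α) / S ^ (1-α) := by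
          intro y
          rw [Real.div_rpow (Real.rpow_nonneg (hf y).le _) hS.le,
            ← Real.rpow_mul (hf y).le, ← mul_div_assoc]
          congr 1
          conv_rhs => rw [show (1/α:ℝ) = 1 + (1/α)*(1-α) by field_simp; ring]
          rw [Real.rpow_add (hf y), Real.rpow_one]
        rw [Finset.sum_congr rfl (fun y _ => e y), ← Finset.sum_div, ← hSs]
        calc S / S ^ (1-α) = S ^ (1:ℝ) / S ^ (1-α) := by rw [Real.rpow_one]
          _ = S ^ ((1:ℝ) - (1-α)) := (Real.rpow_sub hS 1 (1-α)).symm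
          _ = S ^ α := by norm_num
      rw [key, Real.log_rpow hS]
      ring
  · -- lower bound for s
    rintro v ⟨q, ⟨hq0, hq1⟩, hqs, rfl⟩
    rw [sum1 q hq0]
    have hSig : 0 < ∑ y, f y * q y ^ (1-α) :=
      Finset.sum_pos (fun y _ => mul_pos (hf y) (Real.rpow_pos_of_pos (hqs y) _))
        Finset.univ_nonempty
    rcases lt_or_gt_of_ne hα1 with hlt | hgt
    · -- α < 1
      have key : ∑ y, f y * q y ^ (1-α) ≤ S ^ α := by
        have e : ∀ y, f y * q y ^ (1-α) = (f y ^ (1/α)) ^ α * q y ^ (1-α) := by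
          intro y
          rw [← Real.rpow_mul (hf y).le, one_div_mul_cancel hαne, Real.rpow_one]
        rw [Finset.sum_congr rfl fun y _ => e y]
        calc ∑ y, (f y ^ (1/α)) ^ α * q y ^ (1-α)
            ≤ (∑ y, f y ^ (1/α)) ^ α * (∑ y, q y) ^ (1-α) :=
              holder_theta hα0 hlt Finset.univ
                (fun y _ => Real.rpow_nonneg (hf y).le _) (fun y _ => hq0 y)
          _ = S ^ α := by rw [hq1, Real.one_rpow, ← hSs, mul_one]
      have hlog : Real.log (∑ y, f y * q y ^ (1-α)) ≤ α * Real.log S := by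
        rw [← Real.log_rpow hS]
        exact Real.log_le_log hSig key
      have hc' : (1:ℝ)/(α-1) ≤ 0 := by
        apply div_nonpos_of_nonneg_of_nonpos <;> linarith
      calc (α/(α-1)) * Real.log S = (1/(α-1)) * (α * Real.log S) := by ring
        _ ≤ (1/(α-1)) * Real.log (∑ y, f y * q y ^ (1-α)) :=
            mul_le_mul_of_nonpos_left hlog hc'
    · -- α > 1
      have key : S ^ α ≤ ∑ y, f y * q y ^ (1-α) := by
        have h1θ : 1/α < 1 := by rw [div_lt_one hα0]; linarith
        have e : ∀ y, f y ^ (1/α) = (f y * q y ^ (1-α)) ^ (1/α) * q y ^ (1 - 1/α) := by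
          intro y
          rw [Real.mul_rpow (hf y).le (Real.rpow_nonneg (hqs y).le _),
            ← Real.rpow_mul (hqs y).le, mul_assoc, ← Real.rpow_add (hqs y)]
          have hz : (1-α) * (1/α) + (1 - 1/α) = 0 := by field_simp; ring
          rw [hz, Real.rpow_zero, mul_one]
        have H : S ≤ (∑ y, f y * q y ^ (1-α)) ^ (1/α) := by
          calc S = ∑ y, (f y * q y ^ (1-α)) ^ (1/α) * q y ^ (1 - 1/α) := by
                rw [hSs]; exact Finset.sum_congr rfl fun y _ => e y
            _ ≤ (∑ y, f y * q y ^ (1-α)) ^ (1/α) * (∑ y, q y) ^ (1 - 1/α) :=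
                holder_theta (by positivity) h1θ Finset.univ
                  (fun y _ => mul_nonneg (hf y).le (Real.rpow_nonneg (hqs y).le _))
                  (fun y _ => hq0 y)
            _ = (∑ y, f y * q y ^ (1-α)) ^ (1/α) := by rw [hq1, Real.one_rpow, mul_one]
        calc S ^ α ≤ ((∑ y, f y * q y ^ (1-α)) ^ (1/α)) ^ α :=
              Real.rpow_le_rpow hS.le H hα0.le
          _ = ∑ y, f y * q y ^ (1-α) := by
              rw [← Real.rpow_mul hSig.le, one_div_mul_cancel hαne, Real.rpow_one]
      have hlog : α * Real.log S ≤ Real.log (∑ y, f y * q y ^ (1-α)) := by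
        rw [← Real.log_rpow hS]
        exact Real.log_le_log (Real.rpow_pos_of_pos hS _) key
      have hc' : (0:ℝ) ≤ 1/(α-1) := by
        apply div_nonneg <;> linarith
      calc (α/(α-1)) * Real.log S = (1/(α-1)) * (α * Real.log S) := by ring
        _ ≤ (1/(α-1)) * Real.log (∑ y, f y * q y ^ (1-α)) :=
            mul_le_mul_of_nonneg_left hlog hc'
  · -- membership for h
    refine ⟨fun y x => c x y ^ α / g y, fun y => ⟨fun x => (div_pos (Real.rpow_pos_of_pos (hc x y) _) (hg y)).le, ?_⟩,
      fun y x => div_pos (Real.rpow_pos_of_pos (hc x y) _) (hg y), ?_⟩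
    · rw [← Finset.sum_div, ← hgd, div_self (hg y).ne']
    · rw [sum2]
      have e : ∀ y, ∑ x, c x y * (c x y ^ α / g y) ^ (1 - 1/α) = g y ^ (1/α) := by
        intro y
        have e1 : ∀ x, c x y * (c x y ^ α / g y) ^ (1 - 1/α)
            = c x y ^ α * g y ^ (1/α - 1) := by
          intro x
          rw [Real.div_rpow (Real.rpow_nonneg (hc x y).le _) (hg y).le,
            ← Real.rpow_mul (hc x y).le, div_eq_mul_inv, ← Real.rpow_neg (hg y).le]
          have e2 : α * (1 - 1/α) = α - 1 := by field_simp
          have e3 : -(1 - 1/α) = 1/α - 1 := by ring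
          rw [e2, e3, ← mul_assoc]
          congr 1
          conv_rhs => rw [show α = 1 + (α - 1) by ring]
          rw [Real.rpow_add (hc x y), Real.rpow_one]
        rw [Finset.sum_congr rfl fun x _ => e1 x, ← Finset.sum_mul, ← hgd]
        conv_rhs => rw [show (1/α:ℝ) = 1 + (1/α - 1) by ring]
        rw [Real.rpow_add (hg y), Real.rpow_one]
      rw [Finset.sum_congr rfl fun y _ => e y, hsumg, Real.log_div hS.ne' hT.ne']
  · -- lower bound for h
    rintro v ⟨r, hr, hrs, rfl⟩
    rw [sum2]
    have hu : ∀ y, 0 < ∑ x, c x y * r y x ^ (1 - 1/α) := fun y =>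
      Finset.sum_pos (fun x _ => mul_pos (hc x y)
        (Real.rpow_pos_of_pos (hrs y x) _)) Finset.univ_nonempty
    have hSig : 0 < ∑ y, ∑ x, c x y * r y x ^ (1 - 1/α) :=
      Finset.sum_pos (fun y _ => hu y) Finset.univ_nonempty
    rcases lt_or_gt_of_ne hα1 with hlt | hgt
    · -- α < 1 : per y, g y ^ (1/α) ≤ inner sum
      have key : S / T ≤ ∑ y, ∑ x, c x y * r y x ^ (1 - 1/α) := by
        rw [← hsumg]
        refine Finset.sum_le_sum fun y _ => ?_
        have e : ∀ x, c x y ^ α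
            = (c x y * r y x ^ (1 - 1/α)) ^ α * r y x ^ (1-α) := by
          intro x
          rw [Real.mul_rpow (hc x y).le (Real.rpow_nonneg (hrs y x).le _),
            ← Real.rpow_mul (hrs y x).le, mul_assoc, ← Real.rpow_add (hrs y x)]
          have hz : (1 - 1/α) * α + (1-α) = 0 := by field_simp; ring
          rw [hz, Real.rpow_zero, mul_one]
        have H : g y ≤ (∑ x, c x y * r y x ^ (1 - 1/α)) ^ α := by
          calc g y = ∑ x, (c x y * r y x ^ (1 - 1/α)) ^ α * r y x ^ (1-α) := by
                rw [hgd]; exact Finset.sum_congr rfl fun x _ => e x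
            _ ≤ (∑ x, c x y * r y x ^ (1 - 1/α)) ^ α * (∑ x, r y x) ^ (1-α) :=
                holder_theta hα0 hlt Finset.univ
                  (fun x _ => mul_nonneg (hc x y).le (Real.rpow_nonneg (hrs y x).le _))
                  (fun x _ => (hr y).1 x)
            _ = (∑ x, c x y * r y x ^ (1 - 1/α)) ^ α := by
                rw [(hr y).2, Real.one_rpow, mul_one]
        calc g y ^ (1/α) ≤ ((∑ x, c x y * r y x ^ (1 - 1/α)) ^ α) ^ (1/α) :=
              Real.rpow_le_rpow (hg y).le H (by positivity)
          _ = ∑ x, c x y * r y x ^ (1 - 1/α) := by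
              rw [← Real.rpow_mul (hu y).le, mul_one_div_cancel hαne, Real.rpow_one]
      have hlog : Real.log (S/T) ≤ Real.log (∑ y, ∑ x, c x y * r y x ^ (1 - 1/α)) :=
        Real.log_le_log (div_pos hS hT) key
      have hc' : (0:ℝ) ≤ α/(1-α) := by
        apply div_nonneg hα0.le; linarith
      rw [← Real.log_div hS.ne' hT.ne']
      exact mul_le_mul_of_nonneg_left hlog hc'
    · -- α > 1 : per y, inner sum ≤ g y ^ (1/α)
      have h0θ : (0:ℝ) < 1/α := by positivity
      have h1θ : 1/α < 1 := by rw [div_lt_one hα0]; linarith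
      have key : (∑ y, ∑ x, c x y * r y x ^ (1 - 1/α)) ≤ S / T := by
        rw [← hsumg]
        refine Finset.sum_le_sum fun y _ => ?_
        have e : ∀ x, c x y * r y x ^ (1 - 1/α)
            = (c x y ^ α) ^ (1/α) * r y x ^ (1 - 1/α) := by
          intro x
          rw [← Real.rpow_mul (hc x y).le, mul_one_div_cancel hαne, Real.rpow_one]
        calc ∑ x, c x y * r y x ^ (1 - 1/α)
            = ∑ x, (c x y ^ α) ^ (1/α) * r y x ^ (1 - 1/α) :=
              Finset.sum_congr rfl fun x _ => e x
          _ ≤ (∑ x, c x y ^ α) ^ (1/α) * (∑ x, r y x) ^ (1 - 1/α) :=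
              holder_theta h0θ h1θ Finset.univ
                (fun x _ => Real.rpow_nonneg (hc x y).le _) (fun x _ => (hr y).1 x)
          _ = g y ^ (1/α) := by rw [(hr y).2, Real.one_rpow, ← hgd, mul_one]
      have hlog : Real.log (∑ y, ∑ x, c x y * r y x ^ (1 - 1/α)) ≤ Real.log (S/T) :=
        Real.log_le_log hSig key
      have hc' : α/(1-α) ≤ 0 := by
        apply div_nonpos_of_nonneg_of_nonpos hα0.le; linarith
      rw [← Real.log_div hS.ne' hT.ne']
      exact mul_le_mul_of_nonpos_left hlog hc'
  · -- final identity
    simp only [renyi]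
    rw [← hTs]
    have e : (1:ℝ)/(1 - 1/α) = α/(α-1) := by
      rw [show (1:ℝ) - 1/α = (α-1)/α by field_simp, one_div_div]
    rw [e]
    field_simp
    ring
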